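/- For every string S ∈ Σ^n \ H_{n,k} and every cubic position i ∈ P(S), one has |A_{S,i}| ≥ ℓ and |M_{S,i}| < (12γk/n)·|A_{S,i}|. -/

import Mathlib

open Finset
open scoped Classical

noncomputable section

variable {α : Type*}

/-- `i ↻ n`: 1-indexed wrap-around of an (integer) position. -/
def zwrap (n : ℕ) (i : ℤ) : ℕ := ((i - 1) % (n : ℤ)).toNat + 1

/-- `S*[i]`: the infinite cyclic extension of the length-`n` string `S` (1-indexed). -/
def cext (n : ℕ) (S : ℕ → α) (i : ℕ) : α := S ((i - 1) % n + 1)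

/-- The fragment `S*[a..]`, i.e. the string `w` with `w[j] = S*[a+j-1]`. -/
def frag (n : ℕ) (S : ℕ → α) (a : ℕ) : ℕ → α := fun j => cext n S (a + j - 1)

/-- Hamming distance restricted to positions `[a..b]` (1-indexed strings). -/
def hamIcc (a b : ℕ) (S T : ℕ → α) : ℕ := ((Finset.Icc a b).filter fun j => S j ≠ T j).card

/-- Hamming distance between two length-`n` strings. -/
def ham (n : ℕ) (S T : ℕ → α) : ℕ := hamIcc 1 n S T

/-- `p` is a period of the length-`L` string `w` (1-indexed). -/
def IsPeriod (L : ℕ) (w : ℕ → α) (p : ℕ) : Prop :=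
  1 ≤ p ∧ ∀ j, 1 ≤ j → j + p ≤ L → w j = w (j + p)

/-- `per(w)`: the shortest period of the length-`L` string `w`. -/
def per (L : ℕ) (w : ℕ → α) : ℕ := sInf {p | IsPeriod L w p}

/-- `root(S)`: the length of the primitive root of the length-`n` string `S`,
i.e. the least length of a string `Q` with `S = Q^α`. -/
def root (n : ℕ) (S : ℕ → α) : ℕ := sInf {r | r ∣ n ∧ IsPeriod n S r}

/-- `S` is `(a,b)`-pseudo-periodic: it has an `(a,b)`-base. -/
def PseudoPeriodic (n : ℕ) (a b : ℝ) (S : ℕ → α) : Prop :=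
  ∃ S' : ℕ → α, (root n S' : ℝ) ≤ (n : ℝ) / a ∧ (ham n S S' : ℝ) ≤ b

/-- `cyc(S)`: left cyclic rotation, `cyc(S)[i] = S*[i+1]`. -/
def cyc (n : ℕ) (S : ℕ → α) : ℕ → α := fun i => cext n S (i + 1)

/-- `cyc^m(S)` for an integer `m`: `cyc^m(S)[i] = S*[i+m]` (cyclically). -/
def cycZ (n : ℕ) (m : ℤ) (S : ℕ → α) : ℕ → α := fun i => S (zwrap n ((i : ℤ) + m))

/-- `rot_n(P) = {(i-1) ↻ n : i ∈ P}`. -/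
def rotSet (n : ℕ) (P : Finset ℕ) : Finset ℕ := P.image fun i => zwrap n ((i : ℤ) - 1)

/-- `ρ_{S,i} = per(S*[i..i+3ℓ-1])`. -/
def rho (n ℓ : ℕ) (S : ℕ → α) (i : ℕ) : ℕ := per (3 * ℓ) (frag n S i)

/-- `μ_{S,i}*`: the infinite periodic extension of `μ_{S,i} = S*[i..i+ρ_{S,i}-1]` (1-indexed). -/
def muExt (n ℓ : ℕ) (S : ℕ → α) (i : ℕ) : ℕ → α :=
  fun j => cext n S (i + (j - 1) % rho n ℓ S i)

/-- `P(S)`: the set of cubic positions of `S`. -/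
def cubicSet (n ℓ : ℕ) (S : ℕ → α) : Finset ℕ :=
  (Finset.Icc 1 n).filter fun i => rho n ℓ S i ≤ ℓ

/-- The defining set of `τ_{S,i}`:
`{τ ≥ 1 : τ < (n/(γk))·Ham(S*[i..i+τ-1], μ_{S,i}*[1..τ])}`. -/
def tauSet (n ℓ k : ℕ) (γ : ℝ) (S : ℕ → α) (i : ℕ) : Set ℕ :=
  {τ | 1 ≤ τ ∧ (τ : ℝ) < (n : ℝ) / (γ * k) * (hamIcc 1 τ (frag n S i) (muExt n ℓ S i) : ℝ)}

/-- `τ_{S,i}`. -/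
def tau (n ℓ k : ℕ) (γ : ℝ) (S : ℕ → α) (i : ℕ) : ℕ := sInf (tauSet n ℓ k γ S i)

/-- `R_{S,i} = [i..i+τ_{S,i}-1]`. -/
def Rset (n ℓ k : ℕ) (γ : ℝ) (S : ℕ → α) (i : ℕ) : Finset ℕ :=
  Finset.Icc i (i + tau n ℓ k γ S i - 1)

/-- `M_{S,i} = {j ∈ R_{S,i} : S*[j] ≠ μ_{S,i}*[j-i+1]}`. -/
def Mset (n ℓ k : ℕ) (γ : ℝ) (S : ℕ → α) (i : ℕ) : Finset ℕ :=
  (Rset n ℓ k γ S i).filter fun j => cext n S j ≠ muExt n ℓ S i (j - i + 1)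

/-- `A_{S,i} = {j ∈ R_{S,i} : [j..j+2ℓ-1] ⊆ R_{S,i} \ M_{S,i}}`. -/
def Aset (n ℓ k : ℕ) (γ : ℝ) (S : ℕ → α) (i : ℕ) : Finset ℕ :=
  (Rset n ℓ k γ S i).filter fun j =>
    Finset.Icc j (j + 2 * ℓ - 1) ⊆ Rset n ℓ k γ S i \ Mset n ℓ k γ S i

/-- `f_c(S) = ∪_{i ∈ P(S)} {j ↻ n : j ∈ M_{S,i}}`. -/
def fc (n ℓ k : ℕ) (γ : ℝ) (S : ℕ → α) : Finset ℕ :=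
  (cubicSet n ℓ S).biUnion fun i => (Mset n ℓ k γ S i).image fun j => zwrap n (j : ℤ)

lemma isPeriod_self (L : ℕ) (hL : 1 ≤ L) (w : ℕ → α) : IsPeriod L w L :=
  ⟨hL, fun j hj hle => absurd hle (by omega)⟩

lemma per_isPeriod (L : ℕ) (hL : 1 ≤ L) (w : ℕ → α) : IsPeriod L w (per L w) := by
  have hm : L ∈ {p | IsPeriod L w p} := isPeriod_self L hL w
  exact Nat.sInf_mem ⟨L, hm⟩

lemma isPeriod_reduce {L : ℕ} {w : ℕ → α} {p : ℕ} (h : IsPeriod L w p) :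
    ∀ j, 1 ≤ j → j ≤ L → w j = w ((j - 1) % p + 1) := by
  obtain ⟨hp, hw⟩ := h
  intro j
  induction j using Nat.strong_induction_on with
  | _ j ih =>
    intro hj hjL
    by_cases hle : j ≤ p
    · have h1 : (j - 1) % p = j - 1 := Nat.mod_eq_of_lt (by omega)
      rw [h1]
      congr 1
      omega
    · have h2 : w (j - p) = w j := by
        have := hw (j - p) (by omega) (by omega)
        rwa [Nat.sub_add_cancel (by omega)] at this
      rw [← h2, ih (j - p) (by omega) (by omega) (by omega)]
      congr 1
      have h3 : j - 1 = (j - p - 1) + p := by omega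
      rw [h3, Nat.add_mod_right]

lemma cext_eq (n : ℕ) (S : ℕ → α) {j : ℕ} (h1 : 1 ≤ j) (h2 : j ≤ n) : cext n S j = S j := by
  unfold cext
  rw [Nat.mod_eq_of_lt (by omega)]
  congr 1
  omega

lemma cext_mod (n : ℕ) (hn : 1 ≤ n) (S : ℕ → α) {a b : ℕ} (ha : 1 ≤ a) (hb : 1 ≤ b)
    (h : (a - 1) % n = (b - 1) % n) : cext n S a = cext n S b := by
  unfold cext
  rw [h]

lemma rho_pos (n ℓ : ℕ) (hℓ : 1 ≤ ℓ) (S : ℕ → α) (i : ℕ) : 1 ≤ rho n ℓ S i :=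
  (per_isPeriod (3 * ℓ) (by omega) (frag n S i)).1

lemma frag_eq_muExt (n ℓ : ℕ) (S : ℕ → α) (i : ℕ) (hi : 1 ≤ i) (hℓ : 1 ≤ ℓ)
    {j : ℕ} (hj1 : 1 ≤ j) (hj2 : j ≤ 3 * ℓ) :
    frag n S i j = muExt n ℓ S i j := by
  have hper := per_isPeriod (3 * ℓ) (by omega) (frag n S i)
  have hred := isPeriod_reduce hper j hj1 hj2
  rw [hred]
  show cext n S (i + ((j - 1) % rho n ℓ S i + 1) - 1) = cext n S (i + (j - 1) % rho n ℓ S i)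
  congr 1

lemma muExt_mod (n ℓ : ℕ) (S : ℕ → α) (i : ℕ) {a b : ℕ}
    (h : (a - 1) % rho n ℓ S i = (b - 1) % rho n ℓ S i) :
    muExt n ℓ S i a = muExt n ℓ S i b := by
  unfold muExt
  rw [h]

lemma frag_mod (n ℓ : ℕ) (hn : 1 ≤ n) (S : ℕ → α) (i : ℕ) (hi : 1 ≤ i) {a b : ℕ}
    (ha : 1 ≤ a) (hb : 1 ≤ b) (h : (a - 1) % n = (b - 1) % n) :
    frag n S i a = frag n S i b := by
  apply cext_mod n hn S (by omega) (by omega)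
  have h1 : i + a - 1 - 1 = (i - 1) + (a - 1) := by omega
  have h2 : i + b - 1 - 1 = (i - 1) + (b - 1) := by omega
  rw [h1, h2, Nat.add_mod, h, ← Nat.add_mod]

lemma hamIcc_succ (t : ℕ) (S T : ℕ → α) :
    hamIcc 1 (t + 1) S T =
      hamIcc 1 t S T + (if S (t + 1) ≠ T (t + 1) then 1 else 0) := by
  unfold hamIcc
  have h1 : Finset.Icc 1 (t + 1) = insert (t + 1) (Finset.Icc 1 t) := by
    ext x; simp [Finset.mem_Icc]; omega
  rw [h1, Finset.filter_insert]
  by_cases h : S (t + 1) ≠ T (t + 1)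
  · rw [if_pos h, Finset.card_insert_of_notMem (by simp), if_pos h]
  · rw [if_neg h, if_neg h]
    omega

lemma hamIcc_zero_of_eq {t : ℕ} {S T : ℕ → α} (h : ∀ j, 1 ≤ j → j ≤ t → S j = T j) :
    hamIcc 1 t S T = 0 := by
  unfold hamIcc
  rw [Finset.card_eq_zero, Finset.filter_eq_empty_iff]
  intro j hj
  simp only [Finset.mem_Icc] at hj
  simp only [not_not]
  exact h j hj.1 hj.2

lemma hamIcc_as_sum (t : ℕ) (S T : ℕ → α) :
    hamIcc 1 t S T = ∑ j ∈ Finset.Icc 1 t, (if S j ≠ T j then 1 else 0) := by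
  unfold hamIcc
  rw [Finset.card_filter]

lemma card_class (N g c : ℕ) (hg : 1 ≤ g) (hgN : g ∣ N) (hc : c < g) :
    ((Finset.Icc 1 N).filter (fun u => (u - 1) % g = c)).card = N / g := by
  rw [← Finset.card_range (N / g)]
  apply Finset.card_nbij' (fun u => (u - 1 - c) / g) (fun t => t * g + c + 1)
  · intro u hu
    simp only [Finset.mem_coe, Finset.mem_filter, Finset.mem_Icc] at hu
    obtain ⟨⟨hu1, hu2⟩, hmod⟩ := hu
    simp only [Finset.mem_coe, Finset.mem_range]
    have hdm := Nat.div_add_mod (u - 1) g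
    rw [hmod] at hdm
    have h1 : u - 1 - c = g * ((u - 1) / g) := by omega
    rw [h1, Nat.mul_div_cancel_left _ hg]
    exact Nat.div_lt_div_of_lt_of_dvd hgN (by omega)
  · intro t ht
    simp only [Finset.mem_coe, Finset.mem_range] at ht
    simp only [Finset.mem_coe, Finset.mem_filter, Finset.mem_Icc]
    have h3 : N = g * (N / g) := (Nat.mul_div_cancel' hgN).symm
    refine ⟨⟨by omega, by nlinarith⟩, ?_⟩
    simp only [Nat.add_sub_cancel]
    rw [Nat.mul_add_mod']  -- (t * g + c) % g = c % g ?
    exact Nat.mod_eq_of_lt hc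
  · intro u hu
    simp only [Finset.mem_coe, Finset.mem_filter, Finset.mem_Icc] at hu
    obtain ⟨⟨hu1, hu2⟩, hmod⟩ := hu
    have hdm := Nat.div_add_mod (u - 1) g
    rw [hmod] at hdm
    have h1 : u - 1 - c = g * ((u - 1) / g) := by omega
    dsimp only
    rw [h1, Nat.mul_div_cancel_left _ hg, Nat.mul_comm ((u - 1) / g) g]
    omega
  · intro t ht
    simp only [Nat.add_sub_cancel, Nat.add_sub_cancel_left]
    exact Nat.mul_div_cancel t hg

def classSet (N g c : ℕ) : Finset ℕ := (Finset.Icc 1 N).filter (fun u => (u - 1) % g = c)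

lemma Icc_eq_biUnion_classes (N g : ℕ) (hg : 1 ≤ g) :
    Finset.Icc 1 N = (Finset.range g).biUnion (fun c => classSet N g c) := by
  ext u
  simp only [classSet, Finset.mem_biUnion, Finset.mem_range, Finset.mem_filter]
  constructor
  · intro hu
    exact ⟨(u - 1) % g, Nat.mod_lt _ hg, hu, rfl⟩
  · rintro ⟨c, -, hu, -⟩
    exact hu

lemma classes_pairwiseDisjoint (N g : ℕ) :
    (↑(Finset.range g) : Set ℕ).PairwiseDisjoint (fun c => classSet N g c) := by
  intro c _ c' _ hne
  apply Finset.disjoint_left.mpr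
  intro u hu hu'
  simp only [classSet, Finset.mem_filter] at hu hu'
  exact hne (hu.2 ▸ hu'.2.symm ▸ rfl)

lemma T_eq_biUnion (n ρ g : ℕ) (hg : 1 ≤ g) :
    ((Finset.Icc 1 n ×ˢ Finset.Icc 1 ρ).filter
        fun p => (p.1 - 1) % g = (p.2 - 1) % g) =
      (Finset.range g).biUnion (fun c => classSet n g c ×ˢ classSet ρ g c) := by
  ext ⟨u, x⟩
  simp only [classSet, Finset.mem_filter, Finset.mem_product, Finset.mem_biUnion,
    Finset.mem_range]
  constructor
  · rintro ⟨⟨hu, hx⟩, heq⟩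
    exact ⟨(u - 1) % g, Nat.mod_lt _ (by omega), ⟨hu, rfl⟩, ⟨hx, heq.symm⟩⟩
  · rintro ⟨c, hc, ⟨hu, hcu⟩, ⟨hx, hcx⟩⟩
    exact ⟨⟨hu, hx⟩, by rw [hcu, hcx]⟩

lemma pairs_pairwiseDisjoint (n ρ g : ℕ) :
    (↑(Finset.range g) : Set ℕ).PairwiseDisjoint
      (fun c => classSet n g c ×ˢ classSet ρ g c) := by
  intro c _ c' _ hne
  apply Finset.disjoint_left.mpr
  rintro ⟨u, x⟩ hu hu'
  simp only [classSet, Finset.mem_product, Finset.mem_filter] at hu hu'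
  exact hne (hu.1.2 ▸ hu'.1.2.symm ▸ rfl)

lemma card_T (n ρ : ℕ) (hn : 1 ≤ n) (hρ : 1 ≤ ρ) :
    ((Finset.Icc 1 n ×ˢ Finset.Icc 1 ρ).filter
        fun p => (p.1 - 1) % Nat.gcd n ρ = (p.2 - 1) % Nat.gcd n ρ).card = Nat.lcm n ρ := by
  set g := Nat.gcd n ρ with hgdef
  have hg : 1 ≤ g := Nat.gcd_pos_of_pos_left _ hn
  have hgn : g ∣ n := Nat.gcd_dvd_left n ρ
  have hgρ : g ∣ ρ := Nat.gcd_dvd_right n ρ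
  rw [T_eq_biUnion n ρ g hg,
    Finset.card_biUnion (fun x hx y hy hxy => pairs_pairwiseDisjoint n ρ g hx hy hxy)]
  have hone : ∀ c ∈ Finset.range g, (classSet n g c ×ˢ classSet ρ g c).card
      = (n / g) * (ρ / g) := by
    intro c hc
    simp only [Finset.mem_range] at hc
    rw [Finset.card_product]
    rw [classSet, classSet, card_class n g c hg hgn hc, card_class ρ g c hg hgρ hc]
  rw [Finset.sum_congr rfl hone, Finset.sum_const, Finset.card_range, smul_eq_mul]
  have h1 : g * (n / g * (ρ / g)) = n * (ρ / g) := by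
    rw [← Nat.mul_assoc, Nat.mul_div_cancel' hgn]
  rw [h1, ← Nat.mul_div_assoc n hgρ]
  rfl

lemma sum_Icc_lcm_eq (n ρ : ℕ) (hn : 1 ≤ n) (hρ : 1 ≤ ρ) (F : ℕ → ℕ → ℕ) :
    ∑ p ∈ Finset.Icc 1 (Nat.lcm n ρ), F ((p - 1) % n + 1) ((p - 1) % ρ + 1) =
    ∑ q ∈ ((Finset.Icc 1 n ×ˢ Finset.Icc 1 ρ).filter
        fun p => (p.1 - 1) % Nat.gcd n ρ = (p.2 - 1) % Nat.gcd n ρ), F q.1 q.2 := by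
  set g := Nat.gcd n ρ with hgdef
  set L := Nat.lcm n ρ with hLdef
  have hL : 1 ≤ L := Nat.lcm_pos hn hρ
  set i : ℕ → ℕ × ℕ := fun p => ((p - 1) % n + 1, (p - 1) % ρ + 1) with hidef
  have hinj : ∀ p ∈ Finset.Icc 1 L, ∀ p' ∈ Finset.Icc 1 L, i p = i p' → p = p' := by
    have key : ∀ a b, a ∈ Finset.Icc 1 L → b ∈ Finset.Icc 1 L → a ≤ b →
        (a - 1) % n = (b - 1) % n → (a - 1) % ρ = (b - 1) % ρ → a = b := by
      intro a b ha hb hab h1 h2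
      simp only [Finset.mem_Icc] at ha hb
      have hd1 : n ∣ (b - 1) - (a - 1) := (Nat.modEq_iff_dvd' (by omega)).mp h1
      have hd2 : ρ ∣ (b - 1) - (a - 1) := (Nat.modEq_iff_dvd' (by omega)).mp h2
      have hd : L ∣ (b - 1) - (a - 1) := Nat.lcm_dvd hd1 hd2
      have := Nat.eq_zero_of_dvd_of_lt hd (by omega)
      omega
    intro p hp p' hp' heq
    simp only [hidef, Prod.mk.injEq] at heq
    rcases le_total p p' with h | h
    · exact key p p' hp hp' h (by omega) (by omega)
    · exact (key p' p hp' hp h (by omega) (by omega)).symm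
  have hsub : (Finset.Icc 1 L).image i ⊆
      ((Finset.Icc 1 n ×ˢ Finset.Icc 1 ρ).filter
        fun p => (p.1 - 1) % g = (p.2 - 1) % g) := by
    intro q hq
    simp only [Finset.mem_image] at hq
    obtain ⟨p, hp, rfl⟩ := hq
    simp only [Finset.mem_filter, Finset.mem_product, Finset.mem_Icc, hidef]
    have m1 : (p - 1) % n < n := Nat.mod_lt _ hn
    have m2 : (p - 1) % ρ < ρ := Nat.mod_lt _ hρ
    refine ⟨⟨⟨by omega, by omega⟩, by omega, by omega⟩, ?_⟩
    simp only [Nat.add_sub_cancel]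
    rw [Nat.mod_mod_of_dvd _ (Nat.gcd_dvd_left n ρ), Nat.mod_mod_of_dvd _ (Nat.gcd_dvd_right n ρ)]
  have himg : (Finset.Icc 1 L).image i =
      ((Finset.Icc 1 n ×ˢ Finset.Icc 1 ρ).filter
        fun p => (p.1 - 1) % g = (p.2 - 1) % g) := by
    apply Finset.eq_of_subset_of_card_le hsub
    rw [Finset.card_image_of_injOn (fun a ha b hb => hinj a ha b hb), Nat.card_Icc]
    rw [card_T n ρ hn hρ]
    omega
  rw [← himg, Finset.sum_image hinj]

lemma int_emod_add_left (n a b : ℤ) : (a % n + b) % n = (a + b) % n := by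
  rw [Int.add_emod, Int.emod_emod_of_dvd _ dvd_rfl, ← Int.add_emod]

lemma int_toNat_mod (t : ℤ) (ht : 0 ≤ t) (g : ℕ) : t.toNat % g = (t % (g:ℤ)).toNat := by
  rcases Nat.eq_zero_or_pos g with hg | hg
  · subst hg; simp
  · have h1 : (0:ℤ) ≤ t % g := Int.emod_nonneg t (by exact_mod_cast hg.ne')
    have h2 : ((t.toNat % g : ℕ) : ℤ) = (t % (g:ℤ)) := by
      push_cast [Int.toNat_of_nonneg ht]
      rfl
    omega

lemma emod_nonneg_lt (n : ℕ) (hn : 1 ≤ n) (t : ℤ) :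
    0 ≤ t % (n:ℤ) ∧ t % (n:ℤ) < n := by
  constructor
  · exact Int.emod_nonneg t (by positivity)
  · exact Int.emod_lt_of_pos t (by exact_mod_cast hn)

lemma cext_shift (n : ℕ) (hn : 1 ≤ n) (S : ℕ → α) (i j : ℕ) (hi : 1 ≤ i)
    (hj1 : 1 ≤ j) (hj2 : j ≤ n) :
    cext n S (i + (((j:ℤ) - i) % (n:ℤ)).toNat) = S j := by
  obtain ⟨hge, hlt⟩ := emod_nonneg_lt n hn ((j:ℤ) - i)
  set t : ℤ := ((j:ℤ) - i) % (n:ℤ) with htdef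
  unfold cext
  have key : (i + t.toNat - 1) % n = j - 1 := by
    have h1 : ((i + t.toNat - 1 : ℕ) : ℤ) % n = ((j - 1 : ℕ) : ℤ) % n := by
      have hc1 : ((i + t.toNat - 1 : ℕ) : ℤ) = t + ((i:ℤ) - 1) := by
        push_cast [Int.toNat_of_nonneg hge]
        omega
      have hc2 : ((j - 1 : ℕ) : ℤ) = (j : ℤ) - 1 := by push_cast; omega
      rw [hc1, hc2, htdef, int_emod_add_left]
      ring_nf
    have h2 : ((j - 1 : ℕ) : ℤ) % n = ((j - 1 : ℕ) : ℤ) :=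
      Int.emod_eq_of_lt (by positivity) (by push_cast; omega)
    rw [h2] at h1
    have h3 : (((i + t.toNat - 1) % n : ℕ) : ℤ) = ((i + t.toNat - 1 : ℕ) : ℤ) % n := by
      push_cast
      rfl
    omega
  rw [key]
  congr 1
  omega

lemma wrap_eq (n : ℕ) (hn : 1 ≤ n) (a : ℤ) (j : ℕ) (hj1 : 1 ≤ j) (hj2 : j ≤ n)
    (h : a % (n:ℤ) = ((j:ℤ) - 1) % n) : (a % (n:ℤ)).toNat + 1 = j := by
  have h2 : ((j:ℤ) - 1) % n = (j:ℤ) - 1 :=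
    Int.emod_eq_of_lt (by push_cast; omega) (by push_cast; omega)
  rw [h, h2]
  omega

lemma tauSet_nonempty (n k ℓ : ℕ) (γ : ℝ) (hk1 : 1 ≤ k) (hγ : 14 ≤ γ) (hℓ1 : 1 ≤ ℓ)
    (hn : (n : ℝ) = 3 * γ * k * ℓ)
    (S : ℕ → α) (hS : ¬ PseudoPeriodic n (3 * γ * k) (γ * k) S)
    (i : ℕ) (hi1 : 1 ≤ i) (hρℓ : rho n ℓ S i ≤ ℓ) :
    (tauSet n ℓ k γ S i).Nonempty := by
  have hγ0 : (0:ℝ) < γ := by linarith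
  have hk0 : (0:ℝ) < (k:ℝ) := by exact_mod_cast hk1
  have hl0 : (0:ℝ) < (ℓ:ℝ) := by exact_mod_cast hℓ1
  have hγk : (0:ℝ) < γ * k := by positivity
  have hn1 : 1 ≤ n := by
    by_contra hcon
    have hzero : n = 0 := by omega
    rw [hzero] at hn
    push_cast at hn
    nlinarith
  by_contra hne
  rw [Set.not_nonempty_iff_eq_empty] at hne
  have hbound : ∀ τ : ℕ, 1 ≤ τ →
      ((n:ℝ)/(γ*k)) * (hamIcc 1 τ (frag n S i) (muExt n ℓ S i) : ℝ) ≤ τ := by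
    intro τ hτ
    by_contra hcon
    push_neg at hcon
    have hmem : τ ∈ tauSet n ℓ k γ S i := ⟨hτ, hcon⟩
    rw [hne] at hmem
    exact hmem
  have hc : (n:ℝ)/(γ*k) = 3 * ℓ := by
    rw [hn]; field_simp
  set ρ := rho n ℓ S i with hρdef
  have hρ1 : 1 ≤ ρ := rho_pos n ℓ hℓ1 S i
  set g := Nat.gcd n ρ with hgdef
  have hg1 : 1 ≤ g := Nat.gcd_pos_of_pos_left _ hn1
  have hgn : g ∣ n := Nat.gcd_dvd_left n ρ
  have hgρ : g ∣ ρ := Nat.gcd_dvd_right n ρ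
  set q := ρ / g with hqdef
  have hq1 : 1 ≤ q := Nat.div_pos (Nat.le_of_dvd hρ1 hgρ) hg1
  set L := Nat.lcm n ρ with hLdef
  have hL1 : 1 ≤ L := Nat.lcm_pos hn1 hρ1
  have hLq : L = n * q := Nat.mul_div_assoc n hgρ
  set W := frag n S i with hWdef
  set U := muExt n ℓ S i with hUdef
  set d : ℕ → ℕ → ℕ := fun u x => if W u ≠ U x then 1 else 0 with hddef
  have hWmod : ∀ p, 1 ≤ p → W p = W ((p - 1) % n + 1) := by
    intro p hp
    apply frag_mod n ℓ hn1 S i hi1 hp (by omega)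
    rw [Nat.add_sub_cancel]
    exact (Nat.mod_mod_of_dvd _ dvd_rfl).symm
  have hUmod : ∀ p, U p = U ((p - 1) % ρ + 1) := by
    intro p
    apply muExt_mod
    rw [Nat.add_sub_cancel, ← hρdef]
    exact (Nat.mod_mod_of_dvd _ dvd_rfl).symm
  set N := hamIcc 1 L W U with hNdef
  -- Step 1–3: N as a double sum over classes
  have step1 : N = ∑ p ∈ Finset.Icc 1 L, d ((p - 1) % n + 1) ((p - 1) % ρ + 1) := by
    rw [hNdef, hamIcc_as_sum]
    apply Finset.sum_congr rfl
    intro p hp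
    simp only [Finset.mem_Icc] at hp
    simp only [hddef]
    rw [← hWmod p hp.1, ← hUmod p]
  have step2 : N = ∑ c ∈ Finset.range g,
      ∑ u ∈ classSet n g c, ∑ x ∈ classSet ρ g c, d u x := by
    rw [step1, sum_Icc_lcm_eq n ρ hn1 hρ1 d, ← hgdef,
      T_eq_biUnion n ρ g hg1,
      Finset.sum_biUnion (pairs_pairwiseDisjoint n ρ g)]
    apply Finset.sum_congr rfl
    intro c hc
    rw [Finset.sum_product]
  set G : ℕ → ℕ → ℕ := fun c x => ∑ u ∈ classSet n g c, d u x with hGdef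
  have hchoice : ∀ c : ℕ, ∃ x, c < g →
      (x ∈ classSet ρ g c ∧ ∀ y ∈ classSet ρ g c, G c x ≤ G c y) := by
    intro c
    by_cases hcg : c < g
    · have hne2 : (classSet ρ g c).Nonempty := by
        rw [← Finset.card_pos, classSet, card_class ρ g c hg1 hgρ hcg]
        omega
      obtain ⟨x, hx1, hx2⟩ := Finset.exists_min_image (classSet ρ g c) (G c) hne2
      exact ⟨x, fun _ => ⟨hx1, hx2⟩⟩
    · exact ⟨0, fun h => absurd h hcg⟩
  choose xf hxf using hchoice
  set m0 := ∑ c ∈ Finset.range g, G c (xf c) with hm0def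
  have hqm0 : q * m0 ≤ N := by
    rw [step2, hm0def, Finset.mul_sum]
    apply Finset.sum_le_sum
    intro c hc
    simp only [Finset.mem_range] at hc
    obtain ⟨hmem, hmin⟩ := hxf c hc
    calc q * G c (xf c) = ∑ _x ∈ classSet ρ g c, G c (xf c) := by
          rw [Finset.sum_const, classSet, card_class ρ g c hg1 hgρ hc, smul_eq_mul]
      _ ≤ ∑ x ∈ classSet ρ g c, ∑ u ∈ classSet n g c, d u x :=
          Finset.sum_le_sum (fun x hx => hmin x hx)
      _ = ∑ u ∈ classSet n g c, ∑ x ∈ classSet ρ g c, d u x := Finset.sum_comm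
  have hNL : (3 * ℓ : ℝ) * N ≤ L := by
    have := hbound L hL1
    rw [hc] at this
    exact this
  have hm0γk : (m0 : ℝ) ≤ γ * k := by
    have h2 : ((q * m0 : ℕ) : ℝ) ≤ (N : ℝ) := by exact_mod_cast hqm0
    push_cast at h2
    have h3 : (L:ℝ) = n * q := by exact_mod_cast hLq
    have hq0 : (0:ℝ) < q := by exact_mod_cast hq1
    have key : (3 * ℓ : ℝ) * (q * m0) ≤ (n:ℝ) * q := by
      calc (3 * ℓ : ℝ) * (q * m0) ≤ (3 * ℓ : ℝ) * N := by
            apply mul_le_mul_of_nonneg_left h2 (by positivity)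
        _ ≤ L := hNL
        _ = (n:ℝ) * q := h3
    rw [hn] at key
    have key2 : (3 * (ℓ:ℝ)) * m0 ≤ 3 * γ * k * ℓ := by
      nlinarith
    nlinarith
  -- construct the base string
  set S' : ℕ → α := fun j => U (xf ((((j:ℤ) - i) % (g:ℤ)).toNat)) with hS'def
  have hperiod : IsPeriod n S' g := by
    refine ⟨hg1, fun j hj hjn => ?_⟩
    simp only [hS'def]
    congr 2
    have harg : ((j + g : ℕ) : ℤ) - i = ((j:ℤ) - i) + g * 1 := by push_cast; ring
    rw [harg, Int.add_mul_emod_self_left]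
  have hroot : root n S' ≤ g := by
    apply Nat.sInf_le
    exact ⟨hgn, hperiod⟩
  have hrootR : (root n S' : ℝ) ≤ (n:ℝ) / (3 * γ * k) := by
    have hgl : g ≤ ℓ := le_trans (Nat.le_of_dvd hρ1 hgρ) hρℓ
    have h1 : (n:ℝ) / (3 * γ * k) = ℓ := by
      rw [hn]; field_simp
    rw [h1]
    have : (root n S' : ℝ) ≤ (g : ℝ) := by exact_mod_cast hroot
    have h2 : (g:ℝ) ≤ (ℓ:ℝ) := by exact_mod_cast hgl
    linarith
  -- compute the hamming distance
  have hgdvdZ : (g:ℤ) ∣ (n:ℤ) := Int.natCast_dvd_natCast.mpr hgn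
  set uj : ℕ → ℕ := fun j => ((((j:ℤ) - i) % (n:ℤ)).toNat) + 1 with hujdef
  have hptwise : ∀ j, 1 ≤ j → j ≤ n →
      (if S j ≠ S' j then 1 else 0) = d (uj j) (xf ((uj j - 1) % g)) := by
    intro j hj1 hj2
    obtain ⟨hge, hlt⟩ := emod_nonneg_lt n hn1 ((j:ℤ) - i)
    have hSj : S j = W (uj j) := by
      rw [hWdef]
      show S j = cext n S (i + ((((j:ℤ) - i) % (n:ℤ)).toNat + 1) - 1)
      have harith : i + ((((j:ℤ) - i) % (n:ℤ)).toNat + 1) - 1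
          = i + (((j:ℤ) - i) % (n:ℤ)).toNat := by omega
      rw [harith, cext_shift n hn1 S i j hi1 hj1 hj2]
    have harg2 : (uj j - 1) % g = ((((j:ℤ) - i) % (g:ℤ)).toNat) := by
      have h1 : uj j - 1 = (((j:ℤ) - i) % (n:ℤ)).toNat := by
        simp only [hujdef, Nat.add_sub_cancel]
      rw [h1, int_toNat_mod _ hge g, Int.emod_emod_of_dvd _ hgdvdZ]
    have hS'j : S' j = U (xf ((uj j - 1) % g)) := by
      show U (xf ((((j:ℤ) - i) % (g:ℤ)).toNat)) = U (xf ((uj j - 1) % g))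
      rw [harg2]
    rw [hSj, hS'j]
  have hreindex : ∑ j ∈ Finset.Icc 1 n, d (uj j) (xf ((uj j - 1) % g))
      = ∑ u ∈ Finset.Icc 1 n, d u (xf ((u - 1) % g)) := by
    apply Finset.sum_nbij' (i := uj) (j := fun x => ((((x:ℤ) + i - 2) % (n:ℤ)).toNat) + 1)
    · intro j hj
      obtain ⟨hge, hlt⟩ := emod_nonneg_lt n hn1 ((j:ℤ) - i)
      simp only [Finset.mem_Icc, hujdef]
      omega
    · intro x hx
      obtain ⟨hge, hlt⟩ := emod_nonneg_lt n hn1 ((x:ℤ) + i - 2)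
      simp only [Finset.mem_Icc]
      omega
    · intro j hj
      simp only [Finset.mem_Icc] at hj
      obtain ⟨hge, hlt⟩ := emod_nonneg_lt n hn1 ((j:ℤ) - i)
      apply wrap_eq n hn1 _ j hj.1 hj.2
      have h1 : ((uj j : ℕ) : ℤ) + i - 2 = ((j:ℤ) - i) % n + ((i:ℤ) - 1) := by
        simp only [hujdef]
        push_cast [Int.toNat_of_nonneg hge]
        ring
      rw [h1, int_emod_add_left]
      congr 1
      ring
    · intro x hx
      simp only [Finset.mem_Icc] at hx
      obtain ⟨hge, hlt⟩ := emod_nonneg_lt n hn1 ((x:ℤ) + i - 2)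
      simp only [hujdef]
      apply wrap_eq n hn1 _ x hx.1 hx.2
      have h1 : (((((x:ℤ) + i - 2) % (n:ℤ)).toNat + 1 : ℕ) : ℤ) - i
          = ((x:ℤ) + i - 2) % n + (1 - (i:ℤ)) := by
        push_cast [Int.toNat_of_nonneg hge]
        ring
      rw [h1, int_emod_add_left]
      congr 1
      ring
    · intro j hj
      rfl
  have hham : (ham n S S' : ℝ) ≤ γ * k := by
    have heq : ham n S S' = m0 := by
      show hamIcc 1 n S S' = m0
      rw [hamIcc_as_sum]
      have e1 : ∑ j ∈ Finset.Icc 1 n, (if S j ≠ S' j then 1 else 0)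
          = ∑ j ∈ Finset.Icc 1 n, d (uj j) (xf ((uj j - 1) % g)) := by
        apply Finset.sum_congr rfl
        intro j hj
        simp only [Finset.mem_Icc] at hj
        exact hptwise j hj.1 hj.2
      rw [e1, hreindex, Icc_eq_biUnion_classes n g hg1,
        Finset.sum_biUnion (classes_pairwiseDisjoint n g), hm0def]
      apply Finset.sum_congr rfl
      intro c hc
      apply Finset.sum_congr rfl
      intro u hu
      simp only [classSet, Finset.mem_filter] at hu
      rw [hu.2]
    rw [heq]
    exact hm0γk
  exact hS ⟨S', hrootR, hham⟩

/-- For `S ∈ Σ^n \ H_{n,k}` and `i ∈ P(S)`: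
`|A_{S,i}| ≥ ℓ` and `|M_{S,i}| < (12γk/n)·|A_{S,i}|`. -/
theorem stmt8 {α : Type*} (n k ℓ : ℕ) (γ : ℝ)
    (hk1 : 1 ≤ k) (hkn : k ≤ n) (hγ : 14 ≤ γ) (hℓ1 : 1 ≤ ℓ)
    (hn : (n : ℝ) = 3 * γ * k * ℓ)
    (S : ℕ → α) (hS : ¬ PseudoPeriodic n (3 * γ * k) (γ * k) S)
    (i : ℕ) (hi : i ∈ cubicSet n ℓ S) :
    ℓ ≤ (Aset n ℓ k γ S i).card ∧
      ((Mset n ℓ k γ S i).card : ℝ) < 12 * γ * k / n * ((Aset n ℓ k γ S i).card : ℝ) := by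
  simp only [cubicSet, Finset.mem_filter, Finset.mem_Icc] at hi
  obtain ⟨⟨hi1, hin⟩, hρℓ⟩ := hi
  have hγ0 : (0:ℝ) < γ := by linarith
  have hk0 : (0:ℝ) < (k:ℝ) := by exact_mod_cast hk1
  have hl0 : (0:ℝ) < (ℓ:ℝ) := by exact_mod_cast hℓ1
  have hγk : (0:ℝ) < γ * k := by positivity
  have hn1 : 1 ≤ n := le_trans hk1 hkn
  have hc : (n:ℝ)/(γ*k) = 3 * ℓ := by rw [hn]; field_simp
  have hne := tauSet_nonempty n k ℓ γ hk1 hγ hℓ1 hn S hS i hi1 hρℓ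
  set τ := tau n ℓ k γ S i with hτdef
  have hτmem : τ ∈ tauSet n ℓ k γ S i := Nat.sInf_mem hne
  obtain ⟨hτ1, hτlt⟩ := hτmem
  rw [hc] at hτlt
  set m := hamIcc 1 τ (frag n S i) (muExt n ℓ S i) with hmdef
  have hbelow : ∀ t, 1 ≤ t → t < τ →
      (3*(ℓ:ℝ)) * (hamIcc 1 t (frag n S i) (muExt n ℓ S i) : ℝ) ≤ t := by
    intro t ht1 ht2
    by_contra hcon
    push_neg at hcon
    rw [show (3*(ℓ:ℝ)) = (n:ℝ)/(γ*k) by rw [hc]] at hcon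
    have hmem : t ∈ tauSet n ℓ k γ S i := ⟨ht1, hcon⟩
    have hle : τ ≤ t := Nat.sInf_le hmem
    omega
  have hmatch : ∀ t, 1 ≤ t → t ≤ 3*ℓ → frag n S i t = muExt n ℓ S i t :=
    fun t h1 h2 => frag_eq_muExt n ℓ S i hi1 hℓ1 h1 h2
  have hτ3ℓ : 3*ℓ + 1 ≤ τ := by
    by_contra hcon
    push_neg at hcon
    have hz : m = 0 := hamIcc_zero_of_eq (fun j hj1 hj2 => hmatch j hj1 (by omega))
    rw [hz] at hτlt
    push_cast at hτlt
    have : (1:ℝ) ≤ (τ:ℝ) := by exact_mod_cast hτ1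
    linarith
  have hm2 : 2 ≤ m := by
    by_contra hcon
    push_neg at hcon
    have h1 : (m:ℝ) ≤ 1 := by exact_mod_cast (by omega : m ≤ 1)
    have h2 : (τ:ℝ) < 3*(ℓ:ℝ) := by nlinarith
    have h3 : τ < 3*ℓ := by exact_mod_cast h2
    omega
  have hstep : m = hamIcc 1 (τ-1) (frag n S i) (muExt n ℓ S i)
      + (if frag n S i τ ≠ muExt n ℓ S i τ then 1 else 0) := by
    have h := hamIcc_succ (τ-1) (frag n S i) (muExt n ℓ S i)
    rw [Nat.sub_add_cancel hτ1] at h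
    exact h
  have hmismatchτ : frag n S i τ ≠ muExt n ℓ S i τ ∧
      hamIcc 1 (τ-1) (frag n S i) (muExt n ℓ S i) = m - 1 := by
    by_cases hwu : frag n S i τ ≠ muExt n ℓ S i τ
    · refine ⟨hwu, ?_⟩
      rw [if_pos hwu] at hstep
      omega
    · exfalso
      rw [if_neg hwu] at hstep
      have heq : hamIcc 1 (τ-1) (frag n S i) (muExt n ℓ S i) = m := by omega
      have hb := hbelow (τ-1) (by omega) (by omega)
      rw [heq] at hb
      have hcast : ((τ-1:ℕ):ℝ) = (τ:ℝ) - 1 := by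
        rw [Nat.cast_sub hτ1, Nat.cast_one]
      rw [hcast] at hb
      linarith
  have hlast : 3*ℓ*(m-1) + 1 ≤ τ := by
    have hb := hbelow (τ-1) (by omega) (by omega)
    rw [hmismatchτ.2] at hb
    have hcast : ((τ-1:ℕ):ℝ) = (τ:ℝ) - 1 := by
      rw [Nat.cast_sub hτ1, Nat.cast_one]
    rw [hcast] at hb
    push_cast [Nat.cast_sub (by omega : 1 ≤ m)] at hb
    have hb2 : ((3*ℓ*(m-1) : ℕ) : ℝ) ≤ (τ:ℝ) - 1 := by
      push_cast [Nat.cast_sub (by omega : 1 ≤ m)]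
      linarith
    have hb3 : ((3*ℓ*(m-1) : ℕ) : ℝ) ≤ ((τ - 1 : ℕ):ℝ) := by rw [hcast]; exact hb2
    have := (Nat.cast_le (α := ℝ)).mp hb3
    omega
  -- R set facts
  have hRset : Rset n ℓ k γ S i = Finset.Icc i (i + τ - 1) := rfl
  -- positions in the first 3ℓ block are not mismatches
  have hcextfrag : ∀ j, i ≤ j → cext n S j = frag n S i (j - i + 1) := by
    intro j hj
    show cext n S j = cext n S (i + (j - i + 1) - 1)
    congr 1
    omega
  have hMnot : ∀ j, i ≤ j → j ≤ i + 3*ℓ - 1 → j ∉ Mset n ℓ k γ S i := by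
    intro j hj1 hj2 hmem
    simp only [Mset, Finset.mem_filter] at hmem
    apply hmem.2
    rw [hcextfrag j hj1, hmatch (j - i + 1) (by omega) (by omega)]
  have hA1 : Finset.Icc i (i + ℓ) ⊆ Aset n ℓ k γ S i := by
    intro j hj
    simp only [Finset.mem_Icc] at hj
    simp only [Aset, Finset.mem_filter]
    constructor
    · rw [hRset]
      simp only [Finset.mem_Icc]
      omega
    · intro y hy
      simp only [Finset.mem_Icc] at hy
      rw [Finset.mem_sdiff, hRset]
      constructor
      · simp only [Finset.mem_Icc]
        omega
      · exact hMnot y (by omega) (by omega)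
  have hAcard : ℓ + 1 ≤ (Aset n ℓ k γ S i).card := by
    have := Finset.card_le_card hA1
    rw [Nat.card_Icc] at this
    omega
  -- |M| = m
  have hMcard : (Mset n ℓ k γ S i).card = m := by
    rw [hmdef]
    unfold hamIcc
    apply Finset.card_nbij' (i := fun j => j - i + 1) (j := fun t => i + t - 1)
    · intro j hj
      simp only [Finset.mem_coe, Mset, hRset, Finset.mem_filter, Finset.mem_Icc] at hj ⊢
      refine ⟨⟨by omega, by omega⟩, ?_⟩
      rw [← hcextfrag j hj.1.1]
      exact hj.2
    · intro t ht
      simp only [Finset.mem_coe, Mset, hRset, Finset.mem_filter, Finset.mem_Icc] at ht ⊢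
      refine ⟨⟨by omega, by omega⟩, ?_⟩
      have e1 : i + t - 1 - i + 1 = t := by omega
      rw [hcextfrag (i + t - 1) (by omega), e1]
      exact ht.2
    · intro j hj
      simp only [Finset.mem_coe, Mset, hRset, Finset.mem_filter, Finset.mem_Icc] at hj
      dsimp only
      omega
    · intro t ht
      simp only [Finset.mem_coe, Finset.mem_filter, Finset.mem_Icc] at ht
      dsimp only
      omega
  refine ⟨by omega, ?_⟩
  have h12 : 12 * γ * (k:ℝ) / n = 4 / ℓ := by
    rw [hn]
    field_simp
    ring
  rw [hMcard, h12]
  by_cases hm4 : m ≤ 3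
  · -- small m case
    have hA' : ((ℓ:ℝ) + 1) ≤ ((Aset n ℓ k γ S i).card : ℝ) := by exact_mod_cast hAcard
    have hm' : (m:ℝ) ≤ 3 := by exact_mod_cast hm4
    rw [div_mul_eq_mul_div, lt_div_iff₀ hl0]
    nlinarith
  · -- large m case
    push_neg at hm4
    set qm := i + τ - 1 with hqmdef
    have hqmM : qm ∈ Mset n ℓ k γ S i := by
      simp only [Mset, hRset, Finset.mem_filter, Finset.mem_Icc, hqmdef]
      refine ⟨⟨by omega, by omega⟩, ?_⟩
      have e1 : i + τ - 1 - i + 1 = τ := by omega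
      rw [hcextfrag (i + τ - 1) (by omega), e1]
      exact hmismatchτ.1
    set bad := (Mset n ℓ k γ S i).biUnion
        (fun p => Finset.Icc (p - (2*ℓ-1)) p ∩ Finset.Icc i (i + τ - 2*ℓ)) with hbaddef
    set D := Finset.Icc i (i + τ - 2*ℓ) \ bad with hDdef
    have hDA : D ⊆ Aset n ℓ k γ S i := by
      intro j hj
      rw [hDdef, Finset.mem_sdiff] at hj
      obtain ⟨hj1, hj2⟩ := hj
      simp only [Finset.mem_Icc] at hj1
      simp only [Aset, Finset.mem_filter]
      constructor
      · rw [hRset]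
        simp only [Finset.mem_Icc]
        omega
      · intro y hy
        simp only [Finset.mem_Icc] at hy
        rw [Finset.mem_sdiff, hRset]
        refine ⟨by simp only [Finset.mem_Icc]; omega, ?_⟩
        intro hyM
        apply hj2
        rw [hbaddef, Finset.mem_biUnion]
        exact ⟨y, hyM, by simp only [Finset.mem_inter, Finset.mem_Icc]; omega⟩
    have hbadcard : bad.card ≤ 1 + 2*ℓ*(m-1) := by
      calc bad.card ≤ ∑ p ∈ Mset n ℓ k γ S i,
            (Finset.Icc (p - (2*ℓ-1)) p ∩ Finset.Icc i (i + τ - 2*ℓ)).card :=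
          Finset.card_biUnion_le
        _ = (Finset.Icc (qm - (2*ℓ-1)) qm ∩ Finset.Icc i (i + τ - 2*ℓ)).card
            + ∑ p ∈ (Mset n ℓ k γ S i).erase qm,
              (Finset.Icc (p - (2*ℓ-1)) p ∩ Finset.Icc i (i + τ - 2*ℓ)).card :=
          (Finset.add_sum_erase _ _ hqmM).symm
        _ ≤ 1 + 2*ℓ*(m-1) := by
            have hfirst : (Finset.Icc (qm - (2*ℓ-1)) qm ∩ Finset.Icc i (i + τ - 2*ℓ)).card = 1 := by
              have hsing : Finset.Icc (qm - (2*ℓ-1)) qm ∩ Finset.Icc i (i + τ - 2*ℓ)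
                  = {i + τ - 2*ℓ} := by
                ext y
                simp only [Finset.mem_inter, Finset.mem_Icc, Finset.mem_singleton, hqmdef]
                omega
              rw [hsing, Finset.card_singleton]
            have hrest : ∑ p ∈ (Mset n ℓ k γ S i).erase qm,
                (Finset.Icc (p - (2*ℓ-1)) p ∩ Finset.Icc i (i + τ - 2*ℓ)).card
                ≤ 2*ℓ*(m-1) := by
              have hb : ∀ p ∈ (Mset n ℓ k γ S i).erase qm,
                  (Finset.Icc (p - (2*ℓ-1)) p ∩ Finset.Icc i (i + τ - 2*ℓ)).card ≤ 2*ℓ := by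
                intro p hp
                calc (Finset.Icc (p - (2*ℓ-1)) p ∩ Finset.Icc i (i + τ - 2*ℓ)).card
                    ≤ (Finset.Icc (p - (2*ℓ-1)) p).card :=
                      Finset.card_le_card Finset.inter_subset_left
                  _ ≤ 2*ℓ := by rw [Nat.card_Icc]; omega
              calc ∑ p ∈ (Mset n ℓ k γ S i).erase qm,
                  (Finset.Icc (p - (2*ℓ-1)) p ∩ Finset.Icc i (i + τ - 2*ℓ)).card
                  ≤ ∑ _p ∈ (Mset n ℓ k γ S i).erase qm, 2*ℓ := Finset.sum_le_sum hb
                _ = ((Mset n ℓ k γ S i).erase qm).card * (2*ℓ) := by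
                    rw [Finset.sum_const, smul_eq_mul]
                _ = (m-1) * (2*ℓ) := by
                    rw [Finset.card_erase_of_mem hqmM, hMcard]
                _ = 2*ℓ*(m-1) := by ring
            omega
    have hDcard : (Finset.Icc i (i + τ - 2*ℓ)).card ≤ D.card + bad.card :=
      Finset.card_le_card_sdiff_add_card
    have hIcc : (Finset.Icc i (i + τ - 2*ℓ)).card = τ - 2*ℓ + 1 := by
      rw [Nat.card_Icc]
      omega
    have hAD : D.card ≤ (Aset n ℓ k γ S i).card := Finset.card_le_card hDA
    -- final arithmetic
    have e3 : 2*ℓ*(m-1) = 2*(ℓ*(m-1)) := by ring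
    have e4 : 3*ℓ*(m-1) = 3*(ℓ*(m-1)) := by ring
    rw [e3] at hbadcard
    rw [e4] at hlast
    have e5 : ℓ * 3 ≤ ℓ * (m-1) := Nat.mul_le_mul_left ℓ (by omega)
    have e6 : ℓ * m = ℓ*(m-1) + ℓ := by
      conv_lhs => rw [show m = (m-1)+1 by omega]
      rw [Nat.mul_succ]
    have hfin : ℓ * m < 4 * (Aset n ℓ k γ S i).card := by
      rw [e6]
      omega
    rw [div_mul_eq_mul_div, lt_div_iff₀ hl0]
    calc (m:ℝ) * ℓ = ((ℓ * m : ℕ) : ℝ) := by push_cast; ring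
      _ < ((4 * (Aset n ℓ k γ S i).card : ℕ) : ℝ) := by exact_mod_cast hfin
      _ = 4 * ((Aset n ℓ k γ S i).card : ℝ) := by push_cast; ring
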